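/- Let A ∈ ℝ^{m×n} with m ≤ n, let H ∈ ℝ^{n×n} be symmetric positive definite, and let R_d ∈ ℝ^{m×m} be symmetric positive definite. Then every strictly positive eigenvalue μ of the symmetric matrix M = [[−H, Aᵀ],[A, R_d]] satisfies (1/2) ( (λ_min(R_d) − λ_max(H)) + [ (λ_max(H) + λ_min(R_d))² + 4 σ_min(A)² ]^{1/2} ) ≤ μ ≤ (1/2) ( λ_max(R_d) + [ λ_max(R_d)² + 4 σ_max(A)² ]^{1/2} ). -/

import Mathlib

set_option maxHeartbeats 1000000

open Matrix

lemma orth_dot {k : ℕ} {U : Matrix (Fin k) (Fin k) ℝ} (hU : Uᵀ * U = 1) (z : Fin k → ℝ) :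
    (U *ᵥ z) ⬝ᵥ (U *ᵥ z) = z ⬝ᵥ z := by
  calc (U *ᵥ z) ⬝ᵥ (U *ᵥ z) = ((U *ᵥ z) ᵥ* U) ⬝ᵥ z := dotProduct_mulVec _ _ _
    _ = ((z ᵥ* Uᵀ) ᵥ* U) ⬝ᵥ z := by rw [vecMul_transpose]
    _ = (z ᵥ* (Uᵀ * U)) ⬝ᵥ z := by rw [vecMul_vecMul]
    _ = z ⬝ᵥ z := by rw [hU, vecMul_one]

lemma herm_decomp {k : ℕ} {B : Matrix (Fin k) (Fin k) ℝ} (hB : B.IsHermitian) (x : Fin k → ℝ) :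
    ∃ y : Fin k → ℝ,
      x ⬝ᵥ x = ∑ i, y i ^ 2 ∧
      x ⬝ᵥ B *ᵥ x = ∑ i, hB.eigenvalues i * y i ^ 2 ∧
      (B *ᵥ x) ⬝ᵥ (B *ᵥ x) = ∑ i, hB.eigenvalues i ^ 2 * y i ^ 2 := by
  set U : Matrix (Fin k) (Fin k) ℝ := (hB.eigenvectorUnitary : Matrix (Fin k) (Fin k) ℝ) with hUdef
  have hsU : star (hB.eigenvectorUnitary : Matrix (Fin k) (Fin k) ℝ) = Uᵀ := by
    rw [Matrix.star_eq_conjTranspose, conjTranspose_eq_transpose_of_trivial]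
  have hUUt : U * Uᵀ = 1 := by
    have := (Matrix.mem_unitaryGroup_iff).mp hB.eigenvectorUnitary.2
    rwa [hsU] at this
  have hUtU : Uᵀ * U = 1 := by
    have := (Matrix.mem_unitaryGroup_iff').mp hB.eigenvectorUnitary.2
    rwa [hsU] at this
  have hspec : B = U * diagonal hB.eigenvalues * Uᵀ := by
    have h := hB.spectral_theorem
    rwa [Unitary.conjStarAlgAut_apply, hsU, show (RCLike.ofReal ∘ hB.eigenvalues : Fin k → ℝ) = hB.eigenvalues from rfl] at h
  set y : Fin k → ℝ := Uᵀ *ᵥ x with hydef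
  have hyvec : x ᵥ* U = y := by rw [hydef, mulVec_transpose]
  have hBx : B *ᵥ x = U *ᵥ (diagonal hB.eigenvalues *ᵥ y) := by
    conv_rhs => rw [hydef, mulVec_mulVec, mulVec_mulVec]
    rw [← hspec]
  refine ⟨y, ?_, ?_, ?_⟩
  · have h1 : y ⬝ᵥ y = x ⬝ᵥ x := by
      have : (Uᵀ)ᵀ * Uᵀ = 1 := by rwa [transpose_transpose]
      simpa [hydef] using orth_dot this x
    rw [← h1]; simp [dotProduct, pow_two]
  · rw [hBx, dotProduct_mulVec, hyvec]
    simp only [dotProduct, mulVec_diagonal]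
    exact Finset.sum_congr rfl fun i _ => by ring
  · rw [hBx, orth_dot hUtU]
    simp only [dotProduct, mulVec_diagonal]
    exact Finset.sum_congr rfl fun i _ => by ring


/-- Spectral norm (largest singular value) of a real matrix. -/
noncomputable def specNorm {m n : ℕ} (A : Matrix (Fin m) (Fin n) ℝ) : ℝ :=
  Real.sqrt (⨆ i, (Matrix.isHermitian_mul_conjTranspose_self A).eigenvalues i)

/-- Smallest singular value of A (for m ≤ n): σ_min(A)² = λ_min(A Aᵀ). -/
noncomputable def sigMin {m n : ℕ} (A : Matrix (Fin m) (Fin n) ℝ) : ℝ :=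
  Real.sqrt (⨅ i, (Matrix.isHermitian_mul_conjTranspose_self A).eigenvalues i)

/-- With `m ≤ n`, `H` and `R_d` symmetric positive definite, every strictly positive
eigenvalue `μ` of `M = [[−H, Aᵀ],[A, R_d]]` satisfies
`½((λ_min(R_d) − λ_max(H)) + √((λ_max(H) + λ_min(R_d))² + 4σ_min(A)²)) ≤ μ ≤
 ½(λ_max(R_d) + √(λ_max(R_d)² + 4σ_max(A)²))`. -/
theorem stmt_16 {m n : ℕ} (hmn : m ≤ n) (A : Matrix (Fin m) (Fin n) ℝ)
    (H : Matrix (Fin n) (Fin n) ℝ) (hH : H.PosDef)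
    (Rd : Matrix (Fin m) (Fin m) ℝ) (hRd : Rd.PosDef)
    (M : Matrix (Fin n ⊕ Fin m) (Fin n ⊕ Fin m) ℝ)
    (hMdef : M = Matrix.fromBlocks (-H) Aᵀ A Rd) :
    ∀ μ : ℝ, 0 < μ →
      ∀ x : Fin n ⊕ Fin m → ℝ, x ≠ 0 → M.mulVec x = μ • x →
      ((1 / 2) * (((⨅ i, hRd.1.eigenvalues i) - ⨆ i, hH.1.eigenvalues i) +
        Real.sqrt (((⨆ i, hH.1.eigenvalues i) + ⨅ i, hRd.1.eigenvalues i) ^ 2 +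
          4 * sigMin A ^ 2)) ≤ μ) ∧
      (μ ≤ (1 / 2) * ((⨆ i, hRd.1.eigenvalues i) +
        Real.sqrt ((⨆ i, hRd.1.eigenvalues i) ^ 2 + 4 * specNorm A ^ 2))) := by
  intro μ hμ x hx hxe
  set u : Fin n → ℝ := x ∘ Sum.inl with hudef
  set v : Fin m → ℝ := x ∘ Sum.inr with hvdef
  have hxel : x = Sum.elim u v := (Sum.elim_comp_inl_inr x).symm
  rw [hMdef, hxel, fromBlocks_mulVec] at hxe
  have E1 : ∀ i, (-(H *ᵥ u) + Aᵀ *ᵥ v) i = μ * u i := by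
    intro i
    have h := congrFun hxe (Sum.inl i)
    simpa [neg_mulVec] using h
  have E2 : ∀ i, (A *ᵥ u + Rd *ᵥ v) i = μ * v i := by
    intro i
    have h := congrFun hxe (Sum.inr i)
    simpa using h
  set w : Fin n → ℝ := Aᵀ *ᵥ v with hwdef
  have hw : w = μ • u + H *ᵥ u := by
    funext i
    have := E1 i
    simp only [Pi.add_apply, Pi.neg_apply, Pi.smul_apply, smul_eq_mul] at this ⊢
    linarith
  -- v ≠ 0
  have hv : v ≠ 0 := by
    intro hv0
    have hw0 : w = 0 := by rw [hwdef, hv0, mulVec_zero]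
    have hu0 : u = 0 := by
      by_contra hu
      have h1 : u ⬝ᵥ w = 0 := by rw [hw0, dotProduct_zero]
      have h2 : u ⬝ᵥ w = μ * (u ⬝ᵥ u) + u ⬝ᵥ (H *ᵥ u) := by
        rw [hw, dotProduct_add, dotProduct_smul, smul_eq_mul]
      have hpos : 0 < u ⬝ᵥ (H *ᵥ u) := by
        have := hH.dotProduct_mulVec_pos hu
        simpa using this
      have hu2 : 0 < u ⬝ᵥ u := by
        rcases lt_or_eq_of_le (Finset.sum_nonneg fun i _ => mul_self_nonneg (u i)) with h | h
        · exact h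
        · exact absurd (dotProduct_self_eq_zero.mp h.symm) hu
      nlinarith
    exact hx (by rw [hxel, hu0, hv0]; funext i; cases i <;> rfl
      )
  have hm : Nonempty (Fin m) := by
    rcases Function.ne_iff.mp hv with ⟨j, _⟩
    exact ⟨j⟩
  have hn : Nonempty (Fin n) := ⟨⟨0, lt_of_lt_of_le hm.some.pos hmn⟩⟩
  -- decompositions
  obtain ⟨y, hy1, hy2, hy3⟩ := herm_decomp hH.1 u
  obtain ⟨z, hz1, hz2, -⟩ := herm_decomp hRd.1 v
  obtain ⟨p, hp1, hp2, -⟩ := herm_decomp (Matrix.isHermitian_mul_conjTranspose_self A) v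
  set lam := hH.1.eigenvalues with hlam
  set nu := hRd.1.eigenvalues with hnu
  set ev := (Matrix.isHermitian_mul_conjTranspose_self A).eigenvalues with hev
  set LH := ⨆ i, lam i with hLH
  set Rmin := ⨅ i, nu i with hRmin
  set Rmax := ⨆ i, nu i with hRmax
  set Emin := ⨅ i, ev i with hEmin
  set Emax := ⨆ i, ev i with hEmax
  have hlam_pos : ∀ i, 0 < lam i := fun i => hH.eigenvalues_pos i
  have hlam_le : ∀ i, lam i ≤ LH := fun i => le_ciSup (Set.Finite.bddAbove (Set.finite_range _)) i
  have hnu_ge : ∀ i, Rmin ≤ nu i := fun i => ciInf_le (Set.Finite.bddBelow (Set.finite_range _)) i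
  have hnu_le : ∀ i, nu i ≤ Rmax := fun i => le_ciSup (Set.Finite.bddAbove (Set.finite_range _)) i
  have hev_nonneg : ∀ i, 0 ≤ ev i := fun i =>
    (Matrix.posSemidef_self_mul_conjTranspose A).eigenvalues_nonneg i
  have hev_ge : ∀ i, Emin ≤ ev i := fun i => ciInf_le (Set.Finite.bddBelow (Set.finite_range _)) i
  have hev_le : ∀ i, ev i ≤ Emax := fun i => le_ciSup (Set.Finite.bddAbove (Set.finite_range _)) i
  have hLH_pos : 0 < LH := lt_of_lt_of_le (hlam_pos hn.some) (hlam_le hn.some)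
  have hEmin_nonneg : 0 ≤ Emin := le_ciInf hev_nonneg
  have hEmax_nonneg : 0 ≤ Emax := le_trans (hev_nonneg hm.some) (hev_le hm.some)
  have hsig : sigMin A ^ 2 = Emin := Real.sq_sqrt hEmin_nonneg
  have hspecN : specNorm A ^ 2 = Emax := Real.sq_sqrt hEmax_nonneg
  -- key scalar quantities
  have ht : u ⬝ᵥ w = ∑ i, (μ + lam i) * y i ^ 2 := by
    rw [hw, dotProduct_add, dotProduct_smul, smul_eq_mul, hy1, hy2, Finset.mul_sum,
      ← Finset.sum_add_distrib]
    exact Finset.sum_congr rfl fun i _ => by ring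
  have hw2 : w ⬝ᵥ w = ∑ i, (μ + lam i) ^ 2 * y i ^ 2 := by
    have hstep : w ⬝ᵥ w = μ ^ 2 * (u ⬝ᵥ u) + 2 * μ * (u ⬝ᵥ (H *ᵥ u)) + (H *ᵥ u) ⬝ᵥ (H *ᵥ u) := by
      rw [hw]
      simp only [dotProduct_add, add_dotProduct, dotProduct_smul, smul_dotProduct, smul_eq_mul,
        dotProduct_comm (H *ᵥ u) u]
      ring
    rw [hstep, hy1, hy2, hy3, Finset.mul_sum, Finset.mul_sum,
      ← Finset.sum_add_distrib, ← Finset.sum_add_distrib]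
    exact Finset.sum_congr rfl fun i _ => by ring
  have hw2' : w ⬝ᵥ w = ∑ i, ev i * p i ^ 2 := by
    have hAH : A * Aᴴ = A * Aᵀ := by rw [conjTranspose_eq_transpose_of_trivial]
    have : v ⬝ᵥ ((A * Aᴴ) *ᵥ v) = w ⬝ᵥ w := by
      rw [hAH, ← mulVec_mulVec, dotProduct_mulVec, ← mulVec_transpose, hwdef,
        dotProduct_comm]
    rw [← this, hp2]
  have hVz : v ⬝ᵥ v = ∑ i, z i ^ 2 := hz1
  have hVp : v ⬝ᵥ v = ∑ i, p i ^ 2 := hp1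
  have hV_pos : 0 < v ⬝ᵥ v := by
    rcases lt_or_eq_of_le (Finset.sum_nonneg fun i _ => mul_self_nonneg (v i)) with h | h
    · exact h
    · exact absurd (dotProduct_self_eq_zero.mp h.symm) hv
  have hrel : u ⬝ᵥ w + v ⬝ᵥ (Rd *ᵥ v) = μ * (v ⬝ᵥ v) := by
    have h : v ⬝ᵥ (A *ᵥ u + Rd *ᵥ v) = μ * (v ⬝ᵥ v) := by
      have : (A *ᵥ u + Rd *ᵥ v) = μ • v := funext fun i => by
        rw [E2 i]; rfl
      rw [this, dotProduct_smul, smul_eq_mul]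
    rw [dotProduct_add] at h
    have hvAu : v ⬝ᵥ (A *ᵥ u) = u ⬝ᵥ w := by
      rw [dotProduct_mulVec, ← mulVec_transpose, ← hwdef, dotProduct_comm]
    rwa [hvAu] at h
  -- inequalities
  have ht_nonneg : 0 ≤ u ⬝ᵥ w := by
    rw [ht]
    exact Finset.sum_nonneg fun i _ =>
      mul_nonneg (by linarith [hlam_pos i]) (sq_nonneg (y i))
  have I1 : μ * (u ⬝ᵥ w) ≤ w ⬝ᵥ w := by
    rw [ht, hw2, Finset.mul_sum]
    refine Finset.sum_le_sum fun i _ => ?_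
    have h : μ * (μ + lam i) ≤ (μ + lam i) ^ 2 := by nlinarith [hlam_pos i]
    calc μ * ((μ + lam i) * y i ^ 2) = (μ * (μ + lam i)) * y i ^ 2 := by ring
      _ ≤ (μ + lam i) ^ 2 * y i ^ 2 := mul_le_mul_of_nonneg_right h (sq_nonneg _)
  have I2 : w ⬝ᵥ w ≤ (μ + LH) * (u ⬝ᵥ w) := by
    rw [ht, hw2, Finset.mul_sum]
    refine Finset.sum_le_sum fun i _ => ?_
    have h : (μ + lam i) ^ 2 ≤ (μ + LH) * (μ + lam i) := by nlinarith [hlam_pos i, hlam_le i]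
    calc (μ + lam i) ^ 2 * y i ^ 2 ≤ ((μ + LH) * (μ + lam i)) * y i ^ 2 :=
          mul_le_mul_of_nonneg_right h (sq_nonneg _)
      _ = (μ + LH) * ((μ + lam i) * y i ^ 2) := by ring
  have I3a : Rmin * (v ⬝ᵥ v) ≤ v ⬝ᵥ (Rd *ᵥ v) := by
    rw [hz2, hVz, Finset.mul_sum]
    exact Finset.sum_le_sum fun i _ => mul_le_mul_of_nonneg_right (hnu_ge i) (sq_nonneg _)
  have I3b : v ⬝ᵥ (Rd *ᵥ v) ≤ Rmax * (v ⬝ᵥ v) := by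
    rw [hz2, hVz, Finset.mul_sum]
    exact Finset.sum_le_sum fun i _ => mul_le_mul_of_nonneg_right (hnu_le i) (sq_nonneg _)
  have I4a : Emin * (v ⬝ᵥ v) ≤ w ⬝ᵥ w := by
    rw [hw2', hVp, Finset.mul_sum]
    exact Finset.sum_le_sum fun i _ => mul_le_mul_of_nonneg_right (hev_ge i) (sq_nonneg _)
  have I4b : w ⬝ᵥ w ≤ Emax * (v ⬝ᵥ v) := by
    rw [hw2', hVp, Finset.mul_sum]
    exact Finset.sum_le_sum fun i _ => mul_le_mul_of_nonneg_right (hev_le i) (sq_nonneg _)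
  set V := v ⬝ᵥ v
  set t := u ⬝ᵥ w
  set r := v ⬝ᵥ (Rd *ᵥ v)
  constructor
  · -- lower bound
    have key : Emin ≤ (μ + LH) * (μ - Rmin) := by
      have h1 : Emin * V ≤ (μ + LH) * t := le_trans I4a (le_trans I2 (le_refl _))
      have h2 : t ≤ (μ - Rmin) * V := by nlinarith [hrel, I3a]
      have h3 : (μ + LH) * t ≤ (μ + LH) * ((μ - Rmin) * V) := by
        apply mul_le_mul_of_nonneg_left h2 (by linarith)
      have := le_trans h1 h3
      have hV' := hV_pos
      nlinarith
    have hμR : Rmin ≤ μ := by nlinarith [hEmin_nonneg]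
    rw [hsig]
    have hsq : Real.sqrt ((LH + Rmin) ^ 2 + 4 * Emin) ≤ 2 * μ - Rmin + LH := by
      have hb : 0 ≤ 2 * μ - Rmin + LH := by linarith
      have hc : (LH + Rmin) ^ 2 + 4 * Emin ≤ (2 * μ - Rmin + LH) ^ 2 := by nlinarith
      calc Real.sqrt ((LH + Rmin) ^ 2 + 4 * Emin) ≤ Real.sqrt ((2 * μ - Rmin + LH) ^ 2) :=
            Real.sqrt_le_sqrt hc
        _ = 2 * μ - Rmin + LH := by rw [Real.sqrt_sq hb]
    linarith
  · -- upper bound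
    have key : μ * μ ≤ μ * Rmax + Emax := by
      have h1 : μ * t ≤ Emax * V := le_trans I1 I4b
      have h2 : μ * (μ * V) = μ * t + μ * r := by rw [← hrel]; ring
      have h3 : μ * r ≤ μ * (Rmax * V) := mul_le_mul_of_nonneg_left I3b hμ.le
      nlinarith [hV_pos]
    rw [hspecN]
    have hsq : 2 * μ - Rmax ≤ Real.sqrt (Rmax ^ 2 + 4 * Emax) := by
      rcases le_or_gt (2 * μ - Rmax) 0 with h | h
      · exact le_trans h (Real.sqrt_nonneg _)
      · rw [Real.le_sqrt' h]
        nlinarith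
    linarith
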